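/- Let L/K be a finite Galois extension of even degree n with Galois group G containing exactly k elements τ₁, …, τ_k of order 2, with fixed fields F₁, …, F_k respectively, and with remaining non-identity elements σ₁, σ₁⁻¹, …, σ_m, σ_m⁻¹ (so 1 + k + 2m = n). Then the K-linear map φ: L^{k+m} → Alt(L) defined by φ(b₁,…,b_k,c₁,…,c_m) = Σ_{i=1}^k f_{b_i,τ_i} + Σ_{j=1}^m f_{c_j,σ_j} is surjective, and its kernel, of K-dimension kn/2, consists precisely of the tuples (b₁, …, b_k, 0, …, 0) with b_i ∈ F_i for 1 ≤ i ≤ k. -/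

import Mathlib

set_option linter.unusedSectionVars false
set_option maxHeartbeats 1000000


variable {K L : Type*} [Field K] [Field L] [Algebra K L]

/-- The alternating bilinear form `f_{b,σ}(x,y) = Tr^L_K (b * (x * σ y - σ x * y))`,
where `Tr^L_K` is the trace form of the extension `L/K`. -/
noncomputable def galoisAltForm (b : L) (σ : L ≃ₐ[K] L) : (L →ₗ[K] L →ₗ[K] K) :=
  LinearMap.mk₂ K (fun x y => Algebra.trace K L (b * (x * σ y - σ x * y)))
    (fun x x' y => by
      try dsimp only
      rw [show b * ((x + x') * σ y - σ (x + x') * y)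
            = b * (x * σ y - σ x * y) + b * (x' * σ y - σ x' * y) by
          rw [map_add σ]; ring, map_add])
    (fun a x y => by
      try dsimp only
      rw [show b * ((a • x) * σ y - σ (a • x) * y)
            = a • (b * (x * σ y - σ x * y)) by
          rw [map_smul σ]
          simp only [smul_sub, smul_mul_assoc, mul_smul_comm, mul_sub], map_smul])
    (fun x y y' => by
      try dsimp only
      rw [show b * (x * σ (y + y') - σ x * (y + y'))
            = b * (x * σ y - σ x * y) + b * (x * σ y' - σ x * y') by
          rw [map_add σ]; ring, map_add])
    (fun a x y => by
      try dsimp only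
      rw [show b * (x * σ (a • y) - σ x * (a • y))
            = a • (b * (x * σ y - σ x * y)) by
          rw [map_smul σ]
          simp only [smul_sub, smul_mul_assoc, mul_smul_comm, mul_sub], map_smul])

/-- `b ↦ f_{b,σ}` as a `K`-linear map. -/
noncomputable def galoisAltFormL (σ : L ≃ₐ[K] L) : L →ₗ[K] (L →ₗ[K] L →ₗ[K] K) where
  toFun b := galoisAltForm b σ
  map_add' b b' := by
    ext x y
    simp only [galoisAltForm, LinearMap.mk₂_apply, LinearMap.add_apply]
    rw [← map_add, add_mul]
  map_smul' a b := by
    ext x y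
    simp only [galoisAltForm, LinearMap.mk₂_apply, LinearMap.smul_apply, RingHom.id_apply]
    rw [← map_smul, smul_mul_assoc]

/-- The space `Alt(L)` of all alternating `K`-bilinear forms on `L`. -/
def altSubspace (K L : Type*) [Field K] [Field L] [Algebra K L] :
    Submodule K (L →ₗ[K] L →ₗ[K] K) where
  carrier := {f | ∀ x : L, f x x = 0}
  add_mem' hf hg x := by simp [hf x, hg x]
  zero_mem' x := rfl
  smul_mem' a f hf x := by simp [hf x]

/-- The `K`-linear map `φ : L^{k+m} → Bil(L)`,
`φ(b₁,…,b_k,c₁,…,c_m) = ∑ᵢ f_{bᵢ,τᵢ} + ∑ⱼ f_{cⱼ,σⱼ}`. -/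
noncomputable def phiEven (k m : ℕ) (τ : Fin k → (L ≃ₐ[K] L)) (σ : Fin m → (L ≃ₐ[K] L)) :
    ((Fin k → L) × (Fin m → L)) →ₗ[K] (L →ₗ[K] L →ₗ[K] K) :=
  (∑ i, (galoisAltFormL (τ i)).comp
      ((LinearMap.proj i).comp (LinearMap.fst K (Fin k → L) (Fin m → L)))) +
  (∑ j, (galoisAltFormL (σ j)).comp
      ((LinearMap.proj j).comp (LinearMap.snd K (Fin k → L) (Fin m → L))))


namespace St10
section
variable [FiniteDimensional K L] [IsGalois K L]

lemma aeInv (ρ : L ≃ₐ[K] L) (x : L) : ρ⁻¹ (ρ x) = x := ρ.symm_apply_apply x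
lemma aeInv' (ρ : L ≃ₐ[K] L) (x : L) : ρ (ρ⁻¹ x) = x := ρ.apply_symm_apply x

noncomputable def trOne (ρ : L ≃ₐ[K] L) (c : L) : L →ₗ[K] K :=
  (Algebra.trace K L) ∘ₗ (LinearMap.mul K L c) ∘ₗ ρ.toLinearMap

lemma trOne_apply (ρ : L ≃ₐ[K] L) (c y : L) : trOne ρ c y = Algebra.trace K L (c * ρ y) := rfl

noncomputable def trFL (ρ : L ≃ₐ[K] L) : L →ₗ[K] (L →ₗ[K] L →ₗ[K] K) :=
  LinearMap.mk₂ K (fun b x => trOne ρ (b * x))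
    (fun b b' x => by
      ext y; simp only [trOne_apply, LinearMap.add_apply]
      rw [show (b + b') * x * ρ y = b * x * ρ y + b' * x * ρ y by ring, map_add])
    (fun a b x => by
      ext y; simp only [trOne_apply, LinearMap.smul_apply, smul_eq_mul]
      rw [show (a • b) * x * ρ y = a • (b * x * ρ y) by rw [smul_mul_assoc, smul_mul_assoc],
        map_smul]; rfl)
    (fun b x x' => by
      ext y; simp only [trOne_apply, LinearMap.add_apply]
      rw [show b * (x + x') * ρ y = b * x * ρ y + b * x' * ρ y by ring, map_add])
    (fun a b x => by
      ext y; simp only [trOne_apply, LinearMap.smul_apply, smul_eq_mul]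
      rw [show b * (a • x) * ρ y = a • (b * x * ρ y) by
        rw [mul_smul_comm, smul_mul_assoc], map_smul]; rfl)

lemma trFL_apply (ρ : L ≃ₐ[K] L) (b x y : L) :
    trFL ρ b x y = Algebra.trace K L (b * x * ρ y) := by
  simp [trFL, trOne_apply, mul_assoc]

noncomputable def bigPsi : ((L ≃ₐ[K] L) → L) →ₗ[K] (L →ₗ[K] L →ₗ[K] K) :=
  ∑ ρ : L ≃ₐ[K] L, (trFL ρ).comp (LinearMap.proj ρ)

lemma bigPsi_eq_sum (f : (L ≃ₐ[K] L) → L) :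
    bigPsi f = ∑ ρ : L ≃ₐ[K] L, trFL ρ (f ρ) := by
  simp [bigPsi]

lemma bigPsi_apply (f : (L ≃ₐ[K] L) → L) (x y : L) :
    bigPsi f x y = ∑ ρ : L ≃ₐ[K] L, Algebra.trace K L (f ρ * x * ρ y) := by
  rw [bigPsi_eq_sum]
  simp [trFL_apply]

noncomputable local instance : DecidableEq (L ≃ₐ[K] L) := Classical.decEq _

lemma bigPsi_single (ρ : L ≃ₐ[K] L) (b : L) :
    bigPsi (Pi.single ρ b) = trFL ρ b := by
  rw [bigPsi_eq_sum]
  rw [Finset.sum_eq_single ρ]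
  · rw [Pi.single_eq_same]
  · intro ρ' _ hne
    rw [Pi.single_eq_of_ne hne, map_zero]
  · intro h; exact absurd (Finset.mem_univ ρ) h

lemma trace_algEquiv (ρ : L ≃ₐ[K] L) (z : L) :
    Algebra.trace K L (ρ z) = Algebra.trace K L z := by
  apply (algebraMap K L).injective
  rw [trace_eq_sum_automorphisms, trace_eq_sum_automorphisms]
  exact Fintype.sum_equiv (Equiv.mulRight ρ) _ _ (fun g => rfl)

lemma bigPsi_injective : Function.Injective (bigPsi (K := K) (L := L)) := by
  rw [injective_iff_map_eq_zero]
  intro f hf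
  have key : ∀ y : L, ∑ ρ : L ≃ₐ[K] L, f ρ * ρ y = 0 := by
    intro y
    apply (traceForm_nondegenerate K L).1
    intro x
    have h := LinearMap.congr_fun (LinearMap.congr_fun hf x) y
    simp only [bigPsi_apply, LinearMap.zero_apply] at h
    rw [Algebra.traceForm_apply, Finset.sum_mul, ← h, ← map_sum]
    congr 1
    exact Finset.sum_congr rfl fun ρ _ => by ring
  have hind : LinearIndependent L (fun ρ : L ≃ₐ[K] L => (ρ : L → L)) := by
    refine (linearIndependent_monoidHom L L).comp
      (fun ρ : L ≃ₐ[K] L => (ρ : L →* L)) (fun ρ ρ' h => ?_)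
    ext x
    exact congrFun (congrArg (fun (m : L →* L) => (m : L → L)) h) x
  have := Fintype.linearIndependent_iff.mp hind f ?_
  · funext ρ; exact this ρ
  · funext y
    simpa [Finset.sum_apply] using key y

lemma bigPsi_bijective : Function.Bijective (bigPsi (K := K) (L := L)) := by
  refine ⟨bigPsi_injective, ?_⟩
  have h1 : Module.finrank K ((L ≃ₐ[K] L) → L) = Module.finrank K (L →ₗ[K] L →ₗ[K] K) := by
    rw [Module.finrank_pi_fintype, Module.finrank_linearMap, Module.finrank_linearMap,
      Module.finrank_self, mul_one]
    simp [Finset.sum_const, ← Nat.card_eq_fintype_card, IsGalois.card_aut_eq_finrank K L]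
  exact (LinearMap.injective_iff_surjective_of_finrank_eq_finrank (V₂ := L →ₗ[K] L →ₗ[K] K) h1 (f := bigPsi)).mp bigPsi_injective

lemma bigPsi_flip (f : (L ≃ₐ[K] L) → L) :
    (bigPsi f).flip = bigPsi (fun ρ => ρ (f ρ⁻¹)) := by
  ext x y
  rw [LinearMap.flip_apply, bigPsi_apply, bigPsi_apply]
  refine Fintype.sum_equiv (Equiv.inv _) _ _ fun ρ => ?_
  simp only [Equiv.inv_apply, inv_inv]
  rw [← trace_algEquiv ρ⁻¹ (f ρ * y * ρ x),
    show (ρ⁻¹ : L ≃ₐ[K] L) (f ρ * y * ρ x) = ρ⁻¹ (f ρ) * ρ⁻¹ y * x by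
      rw [map_mul, map_mul, aeInv]]
  congr 1
  ring

end
end St10

namespace St10
section
variable [FiniteDimensional K L] [IsGalois K L]

lemma galoisAltForm_apply (b : L) (σ : L ≃ₐ[K] L) (x y : L) :
    galoisAltForm b σ x y = Algebra.trace K L (b * (x * σ y - σ x * y)) := rfl

omit [FiniteDimensional K L] [IsGalois K L] in
lemma mem_altSubspace {B : L →ₗ[K] L →ₗ[K] K} : B ∈ altSubspace K L ↔ ∀ x : L, B x x = 0 :=
  Iff.rfl

lemma galoisAltForm_eq (b : L) (σ : L ≃ₐ[K] L) :
    galoisAltForm b σ = trFL σ b - trFL σ⁻¹ (σ⁻¹ b) := by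
  ext x y
  rw [LinearMap.sub_apply, LinearMap.sub_apply, galoisAltForm_apply, trFL_apply, trFL_apply]
  rw [show (σ⁻¹ : L ≃ₐ[K] L) b * x * σ⁻¹ y = (σ⁻¹ : L ≃ₐ[K] L) (b * σ x * y) by
    rw [map_mul, map_mul, aeInv]]
  rw [trace_algEquiv]
  rw [show b * (x * σ y - σ x * y) = b * x * σ y - b * σ x * y by ring, map_sub]

variable {k m : ℕ}

noncomputable local instance : DecidableEq (L ≃ₐ[K] L) := Classical.decEq _

/-- The coefficient function of `φ(p)` in the decomposition `Ψ`. -/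
noncomputable def sfun (τ : Fin k → (L ≃ₐ[K] L)) (σ : Fin m → (L ≃ₐ[K] L))
    (p : (Fin k → L) × (Fin m → L)) : (L ≃ₐ[K] L) → L :=
  (∑ i, Pi.single (τ i) (p.1 i - τ i (p.1 i))) +
  (∑ j, (Pi.single (σ j) (p.2 j) + Pi.single ((σ j)⁻¹) (-((σ j)⁻¹ (p.2 j)))))

lemma phiEven_apply (τ : Fin k → (L ≃ₐ[K] L)) (σ : Fin m → (L ≃ₐ[K] L))
    (p : (Fin k → L) × (Fin m → L)) :
    phiEven k m τ σ p = (∑ i, galoisAltForm (p.1 i) (τ i)) + ∑ j, galoisAltForm (p.2 j) (σ j) := by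
  simp only [phiEven, LinearMap.add_apply, LinearMap.sum_apply, LinearMap.comp_apply,
    LinearMap.fst_apply, LinearMap.snd_apply, LinearMap.proj_apply]
  rfl

lemma phiEven_eq_bigPsi (τ : Fin k → (L ≃ₐ[K] L)) (σ : Fin m → (L ≃ₐ[K] L))
    (hτ2 : ∀ i, (τ i)⁻¹ = τ i) (p : (Fin k → L) × (Fin m → L)) :
    phiEven k m τ σ p = bigPsi (sfun τ σ p) := by
  rw [phiEven_apply, sfun, map_add, map_sum, map_sum]
  congr 1
  · refine Finset.sum_congr rfl fun i _ => ?_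
    rw [bigPsi_single, galoisAltForm_eq, hτ2 i, map_sub]
  · refine Finset.sum_congr rfl fun j _ => ?_
    rw [map_add, bigPsi_single, bigPsi_single, galoisAltForm_eq, map_neg]
    exact sub_eq_add_neg ((trFL (σ j)) (p.2 j)) _

end
end St10

namespace St10
section
variable [FiniteDimensional K L] [IsGalois K L]
variable {k m : ℕ}
noncomputable local instance : DecidableEq (L ≃ₐ[K] L) := Classical.decEq _

lemma sfun_eval (τ : Fin k → (L ≃ₐ[K] L)) (σ : Fin m → (L ≃ₐ[K] L))
    (henum : Function.Bijective
      (Sum.elim (fun _ : Unit => (1 : L ≃ₐ[K] L))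
        (Sum.elim τ (Sum.elim σ fun j => (σ j)⁻¹)) :
          Unit ⊕ (Fin k ⊕ (Fin m ⊕ Fin m)) → (L ≃ₐ[K] L)))
    (p : (Fin k → L) × (Fin m → L)) :
    sfun τ σ p 1 = 0 ∧
    (∀ i, sfun τ σ p (τ i) = p.1 i - τ i (p.1 i)) ∧
    (∀ j, sfun τ σ p (σ j) = p.2 j) ∧
    (∀ j, sfun τ σ p ((σ j)⁻¹) = -((σ j)⁻¹ (p.2 j))) := by
  have hinj := henum.injective
  have hne : ∀ s t : Unit ⊕ (Fin k ⊕ (Fin m ⊕ Fin m)), s ≠ t →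
      (Sum.elim (fun _ : Unit => (1 : L ≃ₐ[K] L))
        (Sum.elim τ (Sum.elim σ fun j => (σ j)⁻¹))) s ≠
      (Sum.elim (fun _ : Unit => (1 : L ≃ₐ[K] L))
        (Sum.elim τ (Sum.elim σ fun j => (σ j)⁻¹))) t :=
    fun s t h h' => h (hinj h')
  have evalg : ∀ g : L ≃ₐ[K] L, sfun τ σ p g =
      (∑ i, (Pi.single (τ i) (p.1 i - τ i (p.1 i)) : (L ≃ₐ[K] L) → L) g) +
      (∑ j, ((Pi.single (σ j) (p.2 j) : (L ≃ₐ[K] L) → L) g +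
        (Pi.single ((σ j)⁻¹) (-((σ j)⁻¹ (p.2 j))) : (L ≃ₐ[K] L) → L) g)) := by
    intro g
    simp [sfun, Finset.sum_apply]
  refine ⟨?_, ?_, ?_, ?_⟩
  · rw [evalg]
    rw [Finset.sum_eq_zero, Finset.sum_eq_zero, add_zero]
    · intro j _
      rw [Pi.single_eq_of_ne, Pi.single_eq_of_ne, add_zero]
      · exact hne (Sum.inl ()) (Sum.inr (Sum.inr (Sum.inr j))) (by simp)
      · exact hne (Sum.inl ()) (Sum.inr (Sum.inr (Sum.inl j))) (by simp)
    · intro i _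
      exact Pi.single_eq_of_ne (hne (Sum.inl ()) (Sum.inr (Sum.inl i)) (by simp)) _
  · intro i₀
    rw [evalg]
    rw [Finset.sum_eq_single i₀, Finset.sum_eq_zero, add_zero, Pi.single_eq_same]
    · intro j _
      rw [Pi.single_eq_of_ne, Pi.single_eq_of_ne, add_zero]
      · exact hne (Sum.inr (Sum.inl i₀)) (Sum.inr (Sum.inr (Sum.inr j))) (by simp)
      · exact hne (Sum.inr (Sum.inl i₀)) (Sum.inr (Sum.inr (Sum.inl j))) (by simp)
    · intro i _ hi
      exact Pi.single_eq_of_ne (hne (Sum.inr (Sum.inl i₀)) (Sum.inr (Sum.inl i))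
        (by simpa using Ne.symm hi)) _
    · intro h; exact absurd (Finset.mem_univ i₀) h
  · intro j₀
    rw [evalg]
    have hd : σ j₀ ≠ (σ j₀)⁻¹ :=
      hne (Sum.inr (Sum.inr (Sum.inl j₀))) (Sum.inr (Sum.inr (Sum.inr j₀))) (by simp)
    rw [Finset.sum_eq_zero, Finset.sum_eq_single j₀, zero_add, Pi.single_eq_same,
      Pi.single_eq_of_ne hd, add_zero]
    · intro j _ hj
      rw [Pi.single_eq_of_ne, Pi.single_eq_of_ne, add_zero]
      · exact hne (Sum.inr (Sum.inr (Sum.inl j₀))) (Sum.inr (Sum.inr (Sum.inr j))) (by simp)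
      · exact hne (Sum.inr (Sum.inr (Sum.inl j₀))) (Sum.inr (Sum.inr (Sum.inl j)))
          (by simpa using Ne.symm hj)
    · intro h; exact absurd (Finset.mem_univ j₀) h
    · intro i _
      exact Pi.single_eq_of_ne
        (hne (Sum.inr (Sum.inr (Sum.inl j₀))) (Sum.inr (Sum.inl i)) (by simp)) _
  · intro j₀
    rw [evalg]
    have hd : (σ j₀)⁻¹ ≠ σ j₀ :=
      hne (Sum.inr (Sum.inr (Sum.inr j₀))) (Sum.inr (Sum.inr (Sum.inl j₀))) (by simp)
    rw [Finset.sum_eq_zero, Finset.sum_eq_single j₀, zero_add, Pi.single_eq_same,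
      Pi.single_eq_of_ne hd, zero_add]
    · intro j _ hj
      rw [Pi.single_eq_of_ne, Pi.single_eq_of_ne, add_zero]
      · exact hne (Sum.inr (Sum.inr (Sum.inr j₀))) (Sum.inr (Sum.inr (Sum.inr j)))
          (by simpa using Ne.symm hj)
      · exact hne (Sum.inr (Sum.inr (Sum.inr j₀))) (Sum.inr (Sum.inr (Sum.inl j))) (by simp)
    · intro h; exact absurd (Finset.mem_univ j₀) h
    · intro i _
      exact Pi.single_eq_of_ne
        (hne (Sum.inr (Sum.inr (Sum.inr j₀))) (Sum.inr (Sum.inl i)) (by simp)) _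

end
end St10

namespace St10
section
variable [FiniteDimensional K L] [IsGalois K L]

lemma mem_fixedField_zpowers_iff (g : L ≃ₐ[K] L) (x : L) :
    x ∈ IntermediateField.fixedField (Subgroup.zpowers g) ↔ g x = x := by
  constructor
  · intro h
    exact h ⟨g, Subgroup.mem_zpowers g⟩
  · intro h γ
    obtain ⟨z, hz⟩ := γ.2
    have hx : ∀ n : ℕ, (g ^ n) x = x := by
      intro n
      induction n with
      | zero => rfl
      | succ n ih => rw [pow_succ, AlgEquiv.mul_apply, h, ih]
    have hz' : ∀ z : ℤ, (g ^ z) x = x := by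
      intro z
      cases z with
      | ofNat n => simpa using hx n
      | negSucc n =>
        rw [zpow_negSucc]
        have := hx (n + 1)
        conv_lhs => rw [← this]
        exact aeInv _ x
    show γ.1 x = x
    rw [← hz]
    exact hz' z

omit [IsGalois K L] in
lemma finrank_fixed_two (τ : L ≃ₐ[K] L) (hτ : orderOf τ = 2) :
    Module.finrank K (IntermediateField.fixedField (Subgroup.zpowers τ)) * 2
      = Module.finrank K L := by
  classical
  have h2 : Module.finrank (IntermediateField.fixedField (Subgroup.zpowers τ)) L = 2 := by
    rw [IntermediateField.finrank_fixedField_eq_card, ← hτ]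
    exact Nat.card_zpowers τ
  calc Module.finrank K (IntermediateField.fixedField (Subgroup.zpowers τ)) * 2
      = Module.finrank K (IntermediateField.fixedField (Subgroup.zpowers τ)) *
        Module.finrank (IntermediateField.fixedField (Subgroup.zpowers τ)) L := by rw [h2]
    _ = Module.finrank K L := Module.finrank_mul_finrank _ _ _

lemma exists_sub_eq (τ : L ≃ₐ[K] L) (hτ : orderOf τ = 2) (a : L) (ha : τ a = -a) :
    ∃ b : L, b - τ b = a := by
  have hττ : τ * τ = 1 := by rw [← sq, ← hτ, pow_orderOf_eq_one]
  by_cases h2 : (2 : K) = 0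
  · -- char 2 : dimension argument
    have h2L : (2 : L) = 0 := by
      rw [show (2 : L) = algebraMap K L 2 by rw [map_ofNat], h2, map_zero]
    have ha' : τ a = a := by rw [ha]; linear_combination -a * h2L
    set T : L →ₗ[K] L := LinearMap.id - τ.toLinearMap with hT
    have hTapp : ∀ w, T w = w - τ w := fun w => rfl
    have hker : ∀ w, w ∈ LinearMap.ker T ↔ τ w = w := by
      intro w
      rw [LinearMap.mem_ker, hTapp, sub_eq_zero, eq_comm]
    have hrange : LinearMap.range T ≤ LinearMap.ker T := by
      rintro _ ⟨w, rfl⟩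
      rw [hker, hTapp, map_sub]
      have : τ (τ w) = w := by rw [← AlgEquiv.mul_apply, hττ, AlgEquiv.one_apply]
      rw [this]
      linear_combination (τ w - w) * h2L
    have hkereq : LinearMap.ker T
        = Subalgebra.toSubmodule (IntermediateField.fixedField (Subgroup.zpowers τ)).toSubalgebra := by
      ext w
      rw [hker, Subalgebra.mem_toSubmodule, IntermediateField.mem_toSubalgebra,
        mem_fixedField_zpowers_iff]
    have hkerrank : Module.finrank K (LinearMap.ker T) * 2 = Module.finrank K L := by
      rw [hkereq, Subalgebra.finrank_toSubmodule]
      exact finrank_fixed_two τ hτ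
    have hfr := LinearMap.finrank_range_add_finrank_ker T
    have heq : LinearMap.range T = LinearMap.ker T :=
      Submodule.eq_of_le_of_finrank_le hrange (by omega)
    have haker : a ∈ LinearMap.ker T := (hker a).mpr ha'
    rw [← heq] at haker
    obtain ⟨b, hb⟩ := haker
    exact ⟨b, by rw [← hb, hTapp]⟩
  · refine ⟨(algebraMap K L 2)⁻¹ * a, ?_⟩
    have h2L : algebraMap K L 2 ≠ 0 := fun hc => h2 ((algebraMap K L).injective (by simpa using hc))
    have h22 : algebraMap K L 2 = (2 : L) := by rw [map_ofNat]
    have h2L' : (2 : L) ≠ 0 := h22 ▸ h2L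
    rw [map_mul, map_inv₀, AlgEquiv.commutes, ha, h22]
    field_simp
    ring

end
end St10

namespace St10
section
variable [FiniteDimensional K L] [IsGalois K L]

lemma trace_tau_zero (h2 : (2 : L) = 0) (τ : L ≃ₐ[K] L) (hτ1 : τ ≠ 1) (hτ2 : τ * τ = 1)
    (c : L) (hc : τ c = c) (x : L) : Algebra.trace K L (c * x * τ x) = 0 := by
  apply (algebraMap K L).injective
  rw [trace_eq_sum_automorphisms, map_zero]
  apply Finset.sum_ninvolution (g := fun g => g * τ)
  · intro g
    have hfix : (g * τ) (c * x * τ x) = g (c * x * τ x) := by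
      rw [AlgEquiv.mul_apply]
      congr 1
      rw [map_mul, map_mul, hc, show τ (τ x) = x by rw [← AlgEquiv.mul_apply, hτ2,
        AlgEquiv.one_apply]]
      ring
    rw [hfix]
    linear_combination (g (c * x * τ x)) * h2
  · intro g _ hgt
    exact hτ1 (mul_eq_left.mp hgt)
  · intro g; exact Finset.mem_univ _
  · intro g; rw [mul_assoc, hτ2, mul_one]

lemma trace_sq (h2 : (2 : K) = 0) (c : L)
    (hc : ∀ x : L, Algebra.trace K L (c * (x * x)) = 0) : c = 0 := by
  classical
  set Rset : Set L := Set.range fun x : L => x * x with hRset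
  have hone : (1 : L) ∈ Rset := ⟨1, one_mul 1⟩
  have hmul : ∀ a ∈ Rset, ∀ b ∈ Rset, a * b ∈ Rset := by
    rintro _ ⟨u, rfl⟩ _ ⟨v, rfl⟩
    exact ⟨u * v, by ring⟩
  -- the intermediate field generated by squares is everything
  have hE : IntermediateField.adjoin K Rset = ⊤ := by
    rw [eq_top_iff]
    rintro x -
    set E := IntermediateField.adjoin K Rset with hEdef
    have hxx : x * x ∈ E := IntermediateField.subset_adjoin K Rset ⟨x, rfl⟩
    haveI : Algebra.IsSeparable E L := Algebra.isSeparable_tower_top_of_isSeparable K E L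
    have hint : IsIntegral E x := IsIntegral.of_finite E x
    have hsep : (minpoly E x).Separable := Algebra.IsSeparable.isSeparable E x
    set P : Polynomial E := Polynomial.X ^ 2 - Polynomial.C (⟨x * x, hxx⟩ : E) with hP
    have hPmonic : P.Monic := Polynomial.monic_X_pow_sub_C _ two_ne_zero
    have hProot : Polynomial.aeval x P = 0 := by
      rw [hP, map_sub, Polynomial.aeval_X_pow, Polynomial.aeval_C]
      show x ^ 2 - algebraMap E L ⟨x * x, hxx⟩ = 0
      rw [show algebraMap E L ⟨x * x, hxx⟩ = x * x from rfl]
      ring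
    have hdvd : minpoly E x ∣ P := minpoly.dvd E x hProot
    have hPdeg : P.natDegree = 2 := by
      rw [hP]
      exact Polynomial.natDegree_X_pow_sub_C
    have hd2 : (minpoly E x).natDegree ≤ 2 := by
      rw [← hPdeg]
      exact Polynomial.natDegree_le_of_dvd hdvd hPmonic.ne_zero
    have hd1 : 0 < (minpoly E x).natDegree := minpoly.natDegree_pos hint
    have hcase : (minpoly E x).natDegree = 1 ∨ (minpoly E x).natDegree = 2 := by omega
    rcases hcase with h1 | hdeg2
    · obtain ⟨y, hy⟩ := minpoly.natDegree_eq_one_iff.mp h1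
      rw [← hy]
      exact y.2
    · exfalso
      -- then minpoly = P, but P is not separable in char 2
      have hqP : minpoly E x = P := by
        obtain ⟨u, hu⟩ := hdvd
        have hu0 : u ≠ 0 := by
          intro h0
          rw [h0, mul_zero] at hu
          exact hPmonic.ne_zero hu
        have hudeg : u.natDegree = 0 := by
          have := Polynomial.natDegree_mul (minpoly.ne_zero hint) hu0
          rw [← hu, hPdeg, hdeg2] at this
          omega
        have humonic : u.Monic := by
          have hlc := hPmonic
          rw [hu] at hlc
          have := Polynomial.Monic.of_mul_monic_left (minpoly.monic hint) hlc
          exact this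
        have : u = 1 := Polynomial.Monic.natDegree_eq_zero humonic |>.mp hudeg
        rw [hu, this, mul_one]
      have h2E : (2 : E) = 0 := by
        have : (2 : E) = algebraMap K E 2 := by rw [map_ofNat]
        rw [this, h2, map_zero]
      have hderiv : Polynomial.derivative P = 0 := by
        rw [hP, Polynomial.derivative_sub, Polynomial.derivative_C, Polynomial.derivative_X_pow,
          sub_zero]
        norm_num
        exact_mod_cast h2E
      have hsep' : P.Separable := hqP ▸ hsep
      unfold Polynomial.Separable at hsep'
      rw [hderiv] at hsep'
      have : IsUnit P := isCoprime_zero_right.mp hsep'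
      have := Polynomial.natDegree_eq_zero_of_isUnit this
      omega
  -- hence the subalgebra generated by squares is everything
  have hAdj : Algebra.adjoin K Rset = ⊤ := by
    have halg : ∀ z ∈ Rset, IsAlgebraic K z := fun z _ => Algebra.IsAlgebraic.isAlgebraic z
    have := IntermediateField.adjoin_toSubalgebra_of_isAlgebraic halg
    rw [hE, IntermediateField.top_toSubalgebra] at this
    exact this.symm
  -- hence the K-span of squares is everything
  have hspan : Submodule.span K Rset = ⊤ := by
    have hcl : ((Submonoid.closure Rset : Submonoid L) : Set L) ⊆ Rset := by
      intro z hz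
      induction hz using Submonoid.closure_induction with
      | mem w hw => exact hw
      | one => exact hone
      | mul u v _ _ hu hv => exact hmul _ hu _ hv
    have h1 := Algebra.adjoin_eq_span (R := K) (s := Rset)
    rw [hAdj, Algebra.top_toSubmodule] at h1
    have hle : Submodule.span K ((Submonoid.closure Rset : Submonoid L) : Set L)
        ≤ Submodule.span K Rset :=
      Submodule.span_le.mpr fun z hz => Submodule.subset_span (hcl hz)
    rw [eq_top_iff]
    exact h1.le.trans hle
  -- conclude by nondegeneracy
  apply (traceForm_nondegenerate K L).1
  intro y
  have hy : y ∈ Submodule.span K Rset := hspan ▸ Submodule.mem_top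
  rw [Algebra.traceForm_apply]
  induction hy using Submodule.span_induction with
  | mem z hz =>
    obtain ⟨u, rfl⟩ := hz
    exact hc u
  | zero => rw [mul_zero, map_zero]
  | add u v _ _ hu hv => rw [mul_add, map_add, hu, hv, add_zero]
  | smul a u _ hu => rw [mul_smul_comm, map_smul, hu, smul_zero]

end
end St10

namespace St10
section
variable [FiniteDimensional K L] [IsGalois K L]

lemma trace_inv_pair (ρ : L ≃ₐ[K] L) (a x : L) :
    Algebra.trace K L ((-(ρ⁻¹ a)) * x * ρ⁻¹ x) = - Algebra.trace K L (a * x * ρ x) := by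
  rw [show (-(ρ⁻¹ a)) * x * ρ⁻¹ x = -((ρ⁻¹ : L ≃ₐ[K] L) (a * ρ x * x)) by
    rw [map_mul, map_mul, aeInv]; ring, map_neg, trace_algEquiv]
  rw [show a * ρ x * x = a * x * ρ x by ring]

end
end St10

/-- for `n` even, with `τ₁,…,τ_k` the elements of `G` of order 2 (with
fixed fields `Fᵢ`) and the remaining non-identity elements enumerated as
`σ₁, σ₁⁻¹, …, σ_m, σ_m⁻¹` (so `1 + k + 2m = n`), the map `φ` above is surjective onto
`Alt(L)` and its kernel, of dimension `kn/2`, consists exactly of the tuples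
`(b₁,…,b_k,0,…,0)` with `bᵢ ∈ Fᵢ`. -/
theorem statement10 [FiniteDimensional K L] [IsGalois K L]
    (n k m : ℕ) (hn : Module.finrank K L = n) (hkm : 1 + k + 2 * m = n)
    (τ : Fin k → (L ≃ₐ[K] L)) (σ : Fin m → (L ≃ₐ[K] L))
    (hτ : ∀ i, orderOf (τ i) = 2) (hσ : ∀ j, orderOf (σ j) ≠ 2)
    (henum : Function.Bijective
      (Sum.elim (fun _ : Unit => (1 : L ≃ₐ[K] L))
        (Sum.elim τ (Sum.elim σ fun j => (σ j)⁻¹)) :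
          Unit ⊕ (Fin k ⊕ (Fin m ⊕ Fin m)) → (L ≃ₐ[K] L))) :
    LinearMap.range (phiEven k m τ σ) = altSubspace K L ∧
    Module.finrank K (LinearMap.ker (phiEven k m τ σ)) = k * n / 2 ∧
    (∀ p : (Fin k → L) × (Fin m → L), p ∈ LinearMap.ker (phiEven k m τ σ) ↔
      (∀ i, p.1 i ∈ IntermediateField.fixedField (Subgroup.zpowers (τ i))) ∧
        p.2 = 0) := by
  classical
  have hττ1 : ∀ i, τ i * τ i = 1 := fun i => by
    rw [← sq, ← hτ i, pow_orderOf_eq_one]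
  have hτ2 : ∀ i, (τ i)⁻¹ = τ i := fun i => inv_eq_of_mul_eq_one_right (hττ1 i)
  -- ===== Part 3 : kernel characterization =====
  have hker_iff : ∀ p : (Fin k → L) × (Fin m → L), p ∈ LinearMap.ker (phiEven k m τ σ) ↔
      (∀ i, p.1 i ∈ IntermediateField.fixedField (Subgroup.zpowers (τ i))) ∧ p.2 = 0 := by
    intro p
    rw [LinearMap.mem_ker, St10.phiEven_eq_bigPsi τ σ hτ2]
    constructor
    · intro h0
      have hs : St10.sfun τ σ p = 0 :=
        St10.bigPsi_injective (by rw [map_zero]; exact h0)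
      obtain ⟨h1, hτe, hσe, hσe'⟩ := St10.sfun_eval τ σ henum p
      constructor
      · intro i
        rw [St10.mem_fixedField_zpowers_iff]
        have h := hτe i
        rw [hs, Pi.zero_apply] at h
        exact (sub_eq_zero.mp h.symm).symm
      · funext j
        have h := hσe j
        rw [hs, Pi.zero_apply] at h
        exact h.symm
    · rintro ⟨hmem, h20⟩
      have e1 : ∀ i, p.1 i - τ i (p.1 i) = 0 := fun i => by
        rw [(St10.mem_fixedField_zpowers_iff _ _).mp (hmem i), sub_self]
      have e2 : ∀ j, p.2 j = 0 := fun j => by rw [h20]; rfl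
      have hs : St10.sfun τ σ p = 0 := by
        unfold St10.sfun
        simp [e1, e2]
      rw [hs, map_zero]
  -- ===== Part 2 : kernel dimension =====
  have hdim : Module.finrank K (LinearMap.ker (phiEven k m τ σ)) = k * n / 2 := by
    set J : (∀ i : Fin k, (IntermediateField.fixedField (Subgroup.zpowers (τ i)))) →ₗ[K]
        ((Fin k → L) × (Fin m → L)) :=
      LinearMap.prod
        (LinearMap.pi fun i =>
          ((IntermediateField.fixedField (Subgroup.zpowers (τ i))).val.toLinearMap).comp
            (LinearMap.proj i))
        0 with hJ
    have hJapp : ∀ b, J b = ((fun i => (b i : L)), 0) := fun b => rfl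
    have hJinj : Function.Injective J := by
      intro b b' h
      funext i
      have h1 := congrArg Prod.fst h
      exact Subtype.ext (congrFun h1 i)
    have hJrange : LinearMap.range J = LinearMap.ker (phiEven k m τ σ) := by
      ext p
      rw [LinearMap.mem_range, hker_iff]
      constructor
      · rintro ⟨b, rfl⟩
        exact ⟨fun i => (b i).2, rfl⟩
      · rintro ⟨hmem, h20⟩
        refine ⟨fun i => ⟨p.1 i, hmem i⟩, ?_⟩
        rw [hJapp]
        exact Prod.ext rfl h20.symm
    have h1 : Module.finrank K (LinearMap.ker (phiEven k m τ σ))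
        = ∑ i, Module.finrank K (IntermediateField.fixedField (Subgroup.zpowers (τ i))) := by
      rw [← hJrange, LinearMap.finrank_range_of_inj hJinj, Module.finrank_pi_fintype]
    have h3 : Module.finrank K (LinearMap.ker (phiEven k m τ σ)) * 2 = k * n := by
      rw [h1, Finset.sum_mul,
        Finset.sum_congr rfl (fun i _ => by rw [St10.finrank_fixed_two (τ i) (hτ i), hn]),
        Finset.sum_const, Finset.card_univ, Fintype.card_fin, smul_eq_mul]
    omega
  -- ===== Part 1 : range =====
  have hle : LinearMap.range (phiEven k m τ σ) ≤ altSubspace K L := by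
    rintro _ ⟨p, rfl⟩
    rw [St10.mem_altSubspace]
    intro x
    rw [St10.phiEven_apply]
    simp only [LinearMap.add_apply, LinearMap.sum_apply]
    rw [Finset.sum_eq_zero, Finset.sum_eq_zero, add_zero]
    · intro j _
      rw [St10.galoisAltForm_apply, show x * σ j x - σ j x * x = 0 by ring, mul_zero, map_zero]
    · intro i _
      rw [St10.galoisAltForm_apply, show x * τ i x - τ i x * x = 0 by ring, mul_zero, map_zero]
  have hge : altSubspace K L ≤ LinearMap.range (phiEven k m τ σ) := by
    intro B hB
    rw [St10.mem_altSubspace] at hB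
    obtain ⟨f, hf⟩ := St10.bigPsi_bijective.surjective B
    have hanti : ∀ x y : L, B y x = - B x y := by
      intro x y
      have h := hB (x + y)
      simp only [map_add, LinearMap.add_apply, hB x, hB y] at h
      linear_combination h
    have hrel : ∀ ρ : L ≃ₐ[K] L, ρ (f ρ⁻¹) = - f ρ := by
      have h1 : St10.bigPsi (fun ρ : L ≃ₐ[K] L => ρ (f ρ⁻¹)) = St10.bigPsi (-f) := by
        rw [← St10.bigPsi_flip, hf, map_neg, hf]
        ext x y
        rw [LinearMap.flip_apply, LinearMap.neg_apply, LinearMap.neg_apply]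
        exact hanti x y
      intro ρ
      have h2 := congrFun (St10.bigPsi_injective h1) ρ
      simpa using h2
    have hrelinv : ∀ ρ : L ≃ₐ[K] L, f ρ⁻¹ = - ρ⁻¹ (f ρ) := by
      intro ρ
      calc f ρ⁻¹ = ρ⁻¹ (ρ (f ρ⁻¹)) := (St10.aeInv ρ _).symm
      _ = ρ⁻¹ (- f ρ) := by rw [hrel ρ]
      _ = - ρ⁻¹ (f ρ) := map_neg _ _
    have hexb : ∀ i, ∃ b : L, b - τ i b = f (τ i) := by
      intro i
      apply St10.exists_sub_eq (τ i) (hτ i)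
      have h := hrel (τ i)
      rwa [hτ2 i] at h
    choose bb hbb using hexb
    have hτne1 : ∀ i, τ i ≠ 1 := by
      intro i h
      have : (Sum.inr (Sum.inl i) : Unit ⊕ (Fin k ⊕ (Fin m ⊕ Fin m))) = Sum.inl () :=
        henum.injective h
      simp at this
    have hf1 : f 1 = 0 := by
      by_cases h2 : (2 : K) = 0
      · -- characteristic 2
        have h2L : (2 : L) = 0 := by
          rw [show (2 : L) = algebraMap K L 2 by rw [map_ofNat], h2, map_zero]
        apply St10.trace_sq h2
        intro x
        have hxx : St10.bigPsi f x x = 0 := by rw [hf]; exact hB x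
        rw [St10.bigPsi_apply] at hxx
        have hsum := Fintype.sum_bijective _ henum
          (fun s => Algebra.trace K L
            (f ((Sum.elim (fun _ : Unit => (1 : L ≃ₐ[K] L))
              (Sum.elim τ (Sum.elim σ fun j => (σ j)⁻¹))) s) * x *
              ((Sum.elim (fun _ : Unit => (1 : L ≃ₐ[K] L))
              (Sum.elim τ (Sum.elim σ fun j => (σ j)⁻¹))) s) x))
          (fun ρ => Algebra.trace K L (f ρ * x * ρ x)) (fun s => rfl)
        have hxx2 := hsum.trans hxx
        rw [Fintype.sum_sum_type, Fintype.sum_sum_type, Fintype.sum_sum_type] at hxx2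
        simp only [Sum.elim_inl, Sum.elim_inr] at hxx2
        have hτ0 : ∀ i, Algebra.trace K L (f (τ i) * x * τ i x) = 0 := by
          intro i
          apply St10.trace_tau_zero h2L (τ i) (hτne1 i) (hττ1 i)
          have h := hrel (τ i)
          rw [hτ2 i] at h
          rw [h]
          linear_combination (- f (τ i)) * h2L
        have hp0 : ∀ j, Algebra.trace K L (f (σ j) * x * σ j x)
            + Algebra.trace K L (f ((σ j)⁻¹) * x * (σ j)⁻¹ x) = 0 := by
          intro j
          rw [hrelinv (σ j), St10.trace_inv_pair, add_neg_cancel]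
        rw [Fintype.sum_unique, Finset.sum_eq_zero (fun i _ => hτ0 i),
          ← Finset.sum_add_distrib, Finset.sum_eq_zero (fun j _ => hp0 j)] at hxx2
        rw [← mul_assoc]
        simpa using hxx2
      · -- characteristic ≠ 2
        have h2L : (2 : L) ≠ 0 := by
          intro hc
          apply h2
          apply (algebraMap K L).injective
          rw [map_ofNat, map_zero]
          exact hc
        have h := hrel 1
        rw [inv_one] at h
        have h1 : f 1 = - f 1 := by simpa using h
        have h2s : (2 : L) * f 1 = 0 := by linear_combination h1
        rcases mul_eq_zero.mp h2s with hc | hc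
        · exact absurd hc h2L
        · exact hc
    refine ⟨(bb, fun j => f (σ j)), ?_⟩
    rw [St10.phiEven_eq_bigPsi τ σ hτ2, ← hf]
    congr 1
    obtain ⟨h1, hτe, hσe, hσe'⟩ := St10.sfun_eval τ σ henum (bb, fun j => f (σ j))
    funext g
    obtain ⟨s, rfl⟩ := henum.surjective g
    cases s with
    | inl u =>
      show St10.sfun τ σ _ 1 = f 1
      rw [h1, hf1]
    | inr s =>
      cases s with
      | inl i =>
        show St10.sfun τ σ _ (τ i) = f (τ i)
        rw [hτe i]
        exact hbb i
      | inr s =>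
        cases s with
        | inl j =>
          show St10.sfun τ σ _ (σ j) = f (σ j)
          rw [hσe j]
        | inr j =>
          show St10.sfun τ σ _ ((σ j)⁻¹) = f ((σ j)⁻¹)
          rw [hσe' j]
          exact (hrelinv (σ j)).symm
  exact ⟨le_antisymm hle hge, hdim, hker_iff⟩
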